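/- arXiv:0912.2340 — 2 statements merged into one kernel-verified Lean document; each statement's English description precedes it below -/
import Mathlib

section
/- Let h = ⊕ⱼ h_j ∈ H²⊗ℓ² and let g ∈ H² be an outer function with |g|² = ∑ⱼ |h_j|² a.e. on 𝕋. Let A be a unital subalgebra of H^∞. Then for every column multiplier F = (f_i)ᵢ with entries in A, ‖(M_F ⊗ I)h‖ = ‖M_F g‖, i.e., the map U : [(C(A)⊗I)h] → [C(A)g] sending (M_F⊗I)h to M_F g is a well-defined surjective isometry. -/
open MeasureTheory
open scoped Real ENNReal

noncomputable section

instance : Fact (0 < 2 * π) := ⟨by positivity⟩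

abbrev Circle2 : Type := AddCircle (2 * π)

abbrev μT : Measure Circle2 := AddCircle.haarAddCircle

lemma lint_sq_eq (q : Lp ℂ 2 μT) :
    ∫⁻ t, (‖q t‖₊ : ℝ≥0∞) ^ 2 ∂μT = ENNReal.ofReal (‖q‖ ^ 2) := by
  have h1 : eLpNorm q 2 μT = (∫⁻ t, (‖q t‖₊ : ℝ≥0∞) ^ 2 ∂μT) ^ (1 / (2:ℝ)) := by
    rw [eLpNorm_eq_lintegral_rpow_enorm_toReal (by norm_num) (by norm_num)]
    have h20 : ((2:ℝ≥0∞)).toReal = 2 := by norm_num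
    rw [h20]
    congr 1
    exact lintegral_congr fun t => by rw [← ENNReal.rpow_natCast]; norm_num [enorm_eq_nnnorm]
  have hfin : eLpNorm q 2 μT ≠ ⊤ := (Lp.memLp q).2.ne
  have h2 : ∫⁻ t, (‖q t‖₊ : ℝ≥0∞) ^ 2 ∂μT = eLpNorm q 2 μT ^ 2 := by
    rw [h1, ← ENNReal.rpow_natCast _ 2, ← ENNReal.rpow_mul]
    norm_num
  rw [h2, Lp.norm_def, ENNReal.ofReal_pow ENNReal.toReal_nonneg,
    ENNReal.ofReal_toReal hfin]

lemma real_int_eq (φ : Circle2 → ℂ) (hφ : AEMeasurable φ μT) :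
    ∫ t, ‖φ t‖ ^ 2 ∂μT = (∫⁻ t, (‖φ t‖₊ : ℝ≥0∞) ^ 2 ∂μT).toReal := by
  rw [integral_eq_lintegral_of_nonneg_ae (ae_of_all _ fun t => by positivity)
    ((hφ.norm.pow_const 2).aestronglyMeasurable)]
  · congr 1
    refine lintegral_congr fun t => ?_
    rw [ENNReal.ofReal_pow (norm_nonneg _), ofReal_norm_eq_enorm, enorm_eq_nnnorm]


/-- Membership in the Hardy space `H²`: the negative Fourier coefficients vanish. -/
def InH2 (f : Lp ℂ 2 μT) : Prop := ∀ n : ℤ, n < 0 → fourierCoeff (⇑f) n = 0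

/-- `g ∈ H²` is outer. -/
def IsOuter (g : Lp ℂ 2 μT) : Prop :=
  fourierCoeff (⇑g) 0 ≠ 0 ∧
    Real.log (‖fourierCoeff (⇑g) 0‖)
      = ∫ t, Real.log (‖g t‖) ∂μT

/-- Let `h = ⊕ h_j ∈ H² ⊗ ℓ²` and let `g` be an outer function with `|g|² = ∑_j |h_j|²` a.e.
For every column multiplier `F = (f_i)` with entries in a unital subalgebra `A` of `H^∞`,
`‖(M_F ⊗ I) h‖ = ‖M_F g‖`, i.e. the map `U : (M_F ⊗ I) h ↦ M_F g` is a well-defined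
surjective isometry from `[(C(A) ⊗ I) h]` onto `[C(A) g]`. -/
theorem stmt_9 (A : Set (Circle2 → ℂ))
    (hA1 : (fun _ => (1 : ℂ)) ∈ A)
    (hAadd : ∀ f ∈ A, ∀ g ∈ A, f + g ∈ A)
    (hAmul : ∀ f ∈ A, ∀ g ∈ A, f * g ∈ A)
    (hAsmul : ∀ (c : ℂ), ∀ f ∈ A, c • f ∈ A)
    (hAHinf : ∀ f ∈ A, Measurable f ∧ (∃ C, ∀ t, ‖f t‖ ≤ C) ∧
      ∀ n : ℤ, n < 0 → fourierCoeff f n = 0)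
    (h : ℕ → Lp ℂ 2 μT) (hh : ∀ j, InH2 (h j)) (hsum : Summable fun j => ‖h j‖ ^ 2)
    (g : Lp ℂ 2 μT) (hg2 : InH2 g) (hgo : IsOuter g)
    (hpg : ∀ᵐ t ∂μT, ‖g t‖ ^ 2 = ∑' j, ‖h j t‖ ^ 2)
    (f : ℕ → Circle2 → ℂ) (hf : ∀ i, f i ∈ A)
    (hmult : ∀ q : Lp ℂ 2 μT, InH2 q →
      Summable fun i => ∫ t, ‖f i t * q t‖ ^ 2 ∂μT) :
    ∑' j, ∑' i, ∫ t, ‖f i t * h j t‖ ^ 2 ∂μT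
      = ∑' i, ∫ t, ‖f i t * g t‖ ^ 2 ∂μT := by
  classical
  have hfm : ∀ i, Measurable (f i) := fun i => (hAHinf (f i) (hf i)).1
  have hfb : ∀ i, ∃ C : ℝ, ∀ t, ‖f i t‖ ≤ C := fun i => (hAHinf (f i) (hf i)).2.1
  have hmeas_h : ∀ j, AEMeasurable (⇑(h j)) μT :=
    fun j => (Lp.aestronglyMeasurable (h j)).aemeasurable
  have hmeas_g : AEMeasurable (⇑g) μT := (Lp.aestronglyMeasurable g).aemeasurable
  set L : ℕ → ℕ → ℝ≥0∞ := fun i j => ∫⁻ t, (‖f i t * h j t‖₊ : ℝ≥0∞) ^ 2 ∂μT with hLdef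
  set G : ℕ → ℝ≥0∞ := fun i => ∫⁻ t, (‖f i t * g t‖₊ : ℝ≥0∞) ^ 2 ∂μT with hGdef
  -- measurability of integrands
  have hmfh : ∀ i j, AEMeasurable (fun t => (‖f i t * h j t‖₊ : ℝ≥0∞) ^ 2) μT := fun i j =>
    (((hfm i).aemeasurable.mul (hmeas_h j)).enorm).pow_const 2
  have hmh : ∀ j, AEMeasurable (fun t => (‖h j t‖₊ : ℝ≥0∞) ^ 2) μT := fun j =>
    ((hmeas_h j).enorm).pow_const 2
  -- finiteness of the lintegrals
  have hbound : ∀ i (q : Lp ℂ 2 μT),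
      (∫⁻ t, (‖f i t * q t‖₊ : ℝ≥0∞) ^ 2 ∂μT) ≠ ⊤ := by
    intro i q
    obtain ⟨C, hC⟩ := hfb i
    have hle : ∫⁻ t, (‖f i t * q t‖₊ : ℝ≥0∞) ^ 2 ∂μT
        ≤ ∫⁻ t, ENNReal.ofReal C ^ 2 * (‖q t‖₊ : ℝ≥0∞) ^ 2 ∂μT := by
      refine lintegral_mono fun t => ?_
      have h1 : (‖f i t * q t‖₊ : ℝ≥0∞) = (‖f i t‖₊ : ℝ≥0∞) * (‖q t‖₊ : ℝ≥0∞) := by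
        rw [nnnorm_mul]; exact_mod_cast rfl
      have h2 : (‖f i t‖₊ : ℝ≥0∞) ≤ ENNReal.ofReal C := by
        rw [← enorm_eq_nnnorm, ← ofReal_norm_eq_enorm]
        exact ENNReal.ofReal_le_ofReal (hC t)
      rw [h1, mul_pow]
      exact mul_le_mul_left (pow_le_pow_left' h2 2) _
    refine ne_top_of_le_ne_top ?_ hle
    rw [lintegral_const_mul'' _ (show AEMeasurable (fun t => (‖q t‖₊ : ℝ≥0∞) ^ 2) μT from ((Lp.aestronglyMeasurable q).aemeasurable.enorm).pow_const 2)]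
    exact ENNReal.mul_ne_top (ENNReal.pow_ne_top ENNReal.ofReal_ne_top) (by rw [lint_sq_eq q]; exact ENNReal.ofReal_ne_top)
  -- pointwise conversion |x|^2 ↔ ennreal
  have key : ∀ x : ℂ, (‖x‖₊ : ℝ≥0∞) ^ 2 = ENNReal.ofReal (‖x‖ ^ 2) := fun x => by
    rw [ENNReal.ofReal_pow (norm_nonneg _), ofReal_norm_eq_enorm, enorm_eq_nnnorm]
  -- total mass of the h's is finite
  have hsum_lint : ∑' j, (∫⁻ t, (‖h j t‖₊ : ℝ≥0∞) ^ 2 ∂μT) ≠ ⊤ := by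
    have heq : ∀ j, ∫⁻ t, (‖h j t‖₊ : ℝ≥0∞) ^ 2 ∂μT = ENNReal.ofReal (‖h j‖ ^ 2) :=
      fun j => lint_sq_eq (h j)
    simp only [heq]
    rw [← ENNReal.ofReal_tsum_of_nonneg (fun j => by positivity) hsum]
    exact ENNReal.ofReal_ne_top
  -- the key a.e. identity in ℝ≥0∞
  have hae : ∀ᵐ t ∂μT, (‖g t‖₊ : ℝ≥0∞) ^ 2 = ∑' j, (‖h j t‖₊ : ℝ≥0∞) ^ 2 := by
    have hfin : ∀ᵐ t ∂μT, ∑' j, (‖h j t‖₊ : ℝ≥0∞) ^ 2 < ⊤ := by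
      refine ae_lt_top' (AEMeasurable.ennreal_tsum hmh) ?_
      rw [lintegral_tsum hmh]; exact hsum_lint
    filter_upwards [hfin, hpg] with t ht1 ht2
    have hsummable : Summable fun j => ‖h j t‖ ^ 2 := by
      refine Summable.congr (ENNReal.summable_toReal ht1.ne) fun j => ?_
      rw [key, ENNReal.toReal_ofReal (by positivity)]
    rw [key (g t), ht2, ENNReal.ofReal_tsum_of_nonneg (fun j => by positivity) hsummable]
    exact tsum_congr fun j => (key _).symm
  -- the per-row identity : G i = ∑' j, L i j
  have hGL : ∀ i, G i = ∑' j, L i j := by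
    intro i
    rw [hGdef, hLdef, ← lintegral_tsum (fun j => hmfh i j)]
    refine lintegral_congr_ae ?_
    filter_upwards [hae] with t ht
    have hm : ∀ x : ℂ, (‖f i t * x‖₊ : ℝ≥0∞) ^ 2
        = (‖f i t‖₊ : ℝ≥0∞) ^ 2 * (‖x‖₊ : ℝ≥0∞) ^ 2 := fun x => by
      rw [nnnorm_mul, ENNReal.coe_mul, mul_pow]
    rw [hm, ht, ← ENNReal.tsum_mul_left]
    exact tsum_congr fun j => (hm _).symm
  -- each column sum is finite
  have hcol : ∀ j, (∑' i, L i j) ≠ ⊤ := by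
    intro j
    have hs := hmult (h j) (hh j)
    have heq : ∀ i, ∫ t, ‖f i t * h j t‖ ^ 2 ∂μT = (L i j).toReal :=
      fun i => real_int_eq _ ((hfm i).aemeasurable.mul (hmeas_h j))
    have hrw : ∑' i, L i j = ENNReal.ofReal (∑' i, (L i j).toReal) := by
      rw [ENNReal.ofReal_tsum_of_nonneg (fun i => ENNReal.toReal_nonneg)
        ((summable_congr heq).mp hs)]
      exact tsum_congr fun i => (ENNReal.ofReal_toReal (hbound i (h j))).symm
    rw [hrw]; exact ENNReal.ofReal_ne_top
  -- assemble
  calc ∑' j, ∑' i, ∫ t, ‖f i t * h j t‖ ^ 2 ∂μT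
      = ∑' j, ∑' i, (L i j).toReal := by
        exact tsum_congr fun j => tsum_congr fun i =>
          real_int_eq _ ((hfm i).aemeasurable.mul (hmeas_h j))
    _ = ∑' j, (∑' i, L i j).toReal :=
        tsum_congr fun j => (ENNReal.tsum_toReal_eq (fun i => hbound i (h j))).symm
    _ = (∑' j, ∑' i, L i j).toReal := (ENNReal.tsum_toReal_eq hcol).symm
    _ = (∑' i, ∑' j, L i j).toReal := by rw [ENNReal.tsum_comm]
    _ = (∑' i, G i).toReal := by rw [tsum_congr fun i => (hGL i).symm]
    _ = ∑' i, (G i).toReal := ENNReal.tsum_toReal_eq (fun i => hbound i g)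
    _ = ∑' i, ∫ t, ‖f i t * g t‖ ^ 2 ∂μT :=
        tsum_congr fun i => (real_int_eq _ ((hfm i).aemeasurable.mul hmeas_g)).symm


end
end

section
/- Let K₁, K₂ be kernels on X, let x₁,…,xₙ ∈ X, v₁,…,vₙ ∈ ℓ², w₁,…,wₙ ∈ ℂ, and suppose there exist invertible maps on the relevant finite-dimensional spans intertwining the kernels via a multiplier φ with c = ‖M_φ‖‖M_φ⁻¹‖ < ∞, i.e., S* k_x^{K₂} = conj(φ(x)) k_x^{K₁} with S = M_φ invertible. If [(α²⟨v_j,v_i⟩ − w_i conj(w_j)) K₁(x_i,x_j)] ≥ 0, then [(c²α²⟨v_j,v_i⟩ − w_i conj(w_j)) K₂(x_i,x_j)] ≥ 0. -/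
open scoped ENNReal ComplexOrder

local notation "⟪" x ", " y "⟫" => @inner ℂ _ _ x y

private lemma quad_gram {n : ℕ} {E : Type*} [NormedAddCommGroup E] [InnerProductSpace ℂ E]
    (u : Fin n → E) (a : Fin n → ℂ) :
    dotProduct (star a) ((Matrix.of fun i j : Fin n => ⟪u i, u j⟫).mulVec a)
      = ⟪∑ i, a i • u i, ∑ i, a i • u i⟫ := by
  rw [sum_inner]
  simp only [dotProduct, Matrix.mulVec, Matrix.of_apply, Pi.star_apply,
    dotProduct, inner_smul_left, inner_sum, inner_smul_right]
  refine Finset.sum_congr rfl fun i _ => ?_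
  rw [Finset.mul_sum]
  exact Finset.sum_congr rfl fun j _ => by rw [RCLike.star_def]; ring

private lemma complex_real_nonneg {r : ℝ} (hr : 0 ≤ r) : (0 : ℂ) ≤ (r : ℂ) := by
  rw [Complex.zero_le_real]; exact hr

private lemma gram_psd {n : ℕ} {E : Type*} [NormedAddCommGroup E] [InnerProductSpace ℂ E]
    (u : Fin n → E) : Matrix.PosSemidef (Matrix.of fun i j : Fin n => ⟪u i, u j⟫) := by
  refine Matrix.PosSemidef.of_dotProduct_mulVec_nonneg ?_ ?_
  · ext i j
    simp [Matrix.conjTranspose_apply, inner_conj_symm]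
  · intro a
    rw [quad_gram]
    rw [@inner_self_eq_norm_sq_to_K ℂ]
    norm_cast
    exact complex_real_nonneg (by positivity)

private lemma psd_smul {n : ℕ} {M : Matrix (Fin n) (Fin n) ℂ} (hM : M.PosSemidef)
    {r : ℝ} (hr : 0 ≤ r) : Matrix.PosSemidef ((r : ℂ) • M) := by
  refine Matrix.PosSemidef.of_dotProduct_mulVec_nonneg ?_ ?_
  · rw [Matrix.IsHermitian, Matrix.conjTranspose_smul, hM.1, RCLike.star_def,
      Complex.conj_ofReal]
  · intro a
    rw [Matrix.smul_mulVec, dotProduct_smul, smul_eq_mul]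
    exact mul_nonneg (complex_real_nonneg hr) (hM.dotProduct_mulVec_nonneg a)

private lemma sub_norm_gram_psd {n : ℕ} {E F : Type*}
    [NormedAddCommGroup E] [InnerProductSpace ℂ E] [NormedAddCommGroup F]
    [InnerProductSpace ℂ F] (T : E →L[ℂ] F) (u : Fin n → E) :
    Matrix.PosSemidef (Matrix.of fun i j : Fin n =>
      ((‖T‖ : ℂ)) ^ 2 * ⟪u i, u j⟫ - ⟪T (u i), T (u j)⟫) := by
  have hrw : (Matrix.of fun i j : Fin n =>
      ((‖T‖ : ℂ)) ^ 2 * ⟪u i, u j⟫ - ⟪T (u i), T (u j)⟫)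
      = ((‖T‖ : ℂ))^2 • (Matrix.of fun i j : Fin n => ⟪u i, u j⟫)
        - (Matrix.of fun i j : Fin n => ⟪T (u i), T (u j)⟫) := by
    ext i j; simp
  refine Matrix.PosSemidef.of_dotProduct_mulVec_nonneg ?_ ?_
  · ext i j
    simp [Matrix.conjTranspose_apply, inner_conj_symm, Complex.conj_ofReal, mul_comm]
  · intro a
    rw [hrw, Matrix.sub_mulVec, dotProduct_sub, Matrix.smul_mulVec,
      dotProduct_smul, smul_eq_mul, quad_gram, quad_gram]
    have hT : T (∑ i, a i • u i) = ∑ i, a i • T (u i) := by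
      rw [map_sum]; simp
    rw [@inner_self_eq_norm_sq_to_K ℂ, @inner_self_eq_norm_sq_to_K ℂ]
    have hle : ‖∑ i, a i • T (u i)‖ ^ 2 ≤ ‖T‖ ^ 2 * ‖∑ i, a i • u i‖ ^ 2 := by
      rw [← mul_pow]
      have := T.le_opNorm (∑ i, a i • u i)
      rw [hT] at this
      exact pow_le_pow_left₀ (norm_nonneg _) this 2
    have h0 : (0:ℂ) ≤ ((‖T‖ ^ 2 * ‖∑ i, a i • u i‖ ^ 2
        - ‖∑ i, a i • T (u i)‖ ^ 2 : ℝ) : ℂ) :=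
      complex_real_nonneg (by linarith)
    convert h0 using 1
    push_cast
    rfl

private lemma schur_psd {n : ℕ} {M N : Matrix (Fin n) (Fin n) ℂ}
    (hM : M.PosSemidef) (hN : N.PosSemidef) :
    Matrix.PosSemidef (Matrix.of fun i j : Fin n => M i j * N i j) := by
  obtain ⟨B, hB⟩ : ∃ B : Matrix (Fin n) (Fin n) ℂ, N = Matrix.conjTranspose B * B := by
    open scoped MatrixOrder in
    obtain ⟨B, hB⟩ := CStarAlgebra.nonneg_iff_eq_star_mul_self.mp hN.nonneg
    exact ⟨B, hB⟩
  refine Matrix.PosSemidef.of_dotProduct_mulVec_nonneg ?_ ?_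
  · ext i j
    have h1 : (starRingEnd ℂ) (M j i) = M i j := by
      conv_rhs => rw [← hM.1]
      simp [Matrix.conjTranspose_apply]
    have h2 : (starRingEnd ℂ) (N j i) = N i j := by
      conv_rhs => rw [← hN.1]
      simp [Matrix.conjTranspose_apply]
    simp [Matrix.conjTranspose_apply, h1, h2]
  · intro a
    have hNij : ∀ i j, N i j = ∑ k, (starRingEnd ℂ) (B k i) * B k j := by
      intro i j
      rw [hB]
      simp [Matrix.mul_apply, Matrix.conjTranspose_apply]
    have L : dotProduct (star a)
        ((Matrix.of fun i j : Fin n => M i j * N i j).mulVec a)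
        = ∑ i, ∑ j, ∑ k, (starRingEnd ℂ) (B k i) * (starRingEnd ℂ) (a i)
            * M i j * (B k j * a j) := by
      simp only [dotProduct, Matrix.mulVec, Matrix.of_apply, Pi.star_apply,
        hNij, Finset.mul_sum, Finset.sum_mul, RCLike.star_def]
      refine Finset.sum_congr rfl fun i _ => ?_
      refine Finset.sum_congr rfl fun j _ => ?_
      refine Finset.sum_congr rfl fun k _ => ?_
      ring
    have R : ∀ k, dotProduct (star (fun j => B k j * a j))
        (M.mulVec (fun j => B k j * a j))
        = ∑ i, ∑ j, (starRingEnd ℂ) (B k i) * (starRingEnd ℂ) (a i)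
            * M i j * (B k j * a j) := by
      intro k
      simp only [dotProduct, Matrix.mulVec, Pi.star_apply, RCLike.star_def,
        Finset.mul_sum, map_mul]
      refine Finset.sum_congr rfl fun i _ => ?_
      refine Finset.sum_congr rfl fun j _ => ?_
      ring
    have key : dotProduct (star a)
        ((Matrix.of fun i j : Fin n => M i j * N i j).mulVec a)
        = ∑ k, dotProduct (star (fun j => B k j * a j))
            (M.mulVec (fun j => B k j * a j)) := by
      rw [L]
      refine (Finset.sum_congr rfl fun i _ => Finset.sum_comm).trans ?_
      refine (Finset.sum_comm).trans ?_
      exact Finset.sum_congr rfl fun k _ => (R k).symm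
    rw [key]
    exact Finset.sum_nonneg fun k _ => hM.dotProduct_mulVec_nonneg _

/-- Transport of the tangential matrix positivity condition between two kernels `K₁, K₂` on `X`
under a similarity `S = M_φ` with `S* k_x^{K₂} = conj (φ x) • k_x^{K₁}`, at the cost of the
constant `c = ‖S‖ ‖S⁻¹‖`:  if `[(α² ⟨v_j,v_i⟩ − w_i conj w_j) K₁(x_i,x_j)] ≥ 0` then
`[(c² α² ⟨v_j,v_i⟩ − w_i conj w_j) K₂(x_i,x_j)] ≥ 0`. -/
theorem stmt_18 {X H₁ H₂ : Type*}
    [NormedAddCommGroup H₁] [InnerProductSpace ℂ H₁] [CompleteSpace H₁]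
    [NormedAddCommGroup H₂] [InnerProductSpace ℂ H₂] [CompleteSpace H₂]
    (k1 : X → H₁) (k2 : X → H₂) (φ : X → ℂ) (S : H₁ ≃L[ℂ] H₂)
    (hS : ∀ x, ContinuousLinearMap.adjoint (S : H₁ →L[ℂ] H₂) (k2 x)
        = (starRingEnd ℂ) (φ x) • k1 x)
    (α : ℝ) (n : ℕ) (x : Fin n → X)
    (v : Fin n → lp (fun _ : ℕ => ℂ) 2) (w : Fin n → ℂ)
    (hpos : Matrix.PosSemidef (Matrix.of fun i j : Fin n =>
      ((α : ℂ) ^ 2 * ⟪v i, v j⟫ - w i * (starRingEnd ℂ) (w j)) * ⟪k1 (x i), k1 (x j)⟫)) :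
    Matrix.PosSemidef (Matrix.of fun i j : Fin n =>
      (((‖(S : H₁ →L[ℂ] H₂)‖ * ‖(S.symm : H₂ →L[ℂ] H₁)‖ : ℝ) : ℂ) ^ 2 * (α : ℂ) ^ 2
          * ⟪v i, v j⟫ - w i * (starRingEnd ℂ) (w j)) * ⟪k2 (x i), k2 (x j)⟫) := by
  classical
  set Sc : H₁ →L[ℂ] H₂ := (S : H₁ →L[ℂ] H₂) with hScdef
  set Si : H₂ →L[ℂ] H₁ := (S.symm : H₂ →L[ℂ] H₁) with hSidef
  set T₁ : H₂ →L[ℂ] H₁ := ContinuousLinearMap.adjoint Sc with hT₁def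
  set T₂ : H₁ →L[ℂ] H₂ := ContinuousLinearMap.adjoint Si with hT₂def
  have hcomp : Sc.comp Si = ContinuousLinearMap.id ℂ H₂ := by
    ext z; simp [hScdef, hSidef]
  have hT21 : ∀ y : H₂, T₂ (T₁ y) = y := by
    intro y
    have h : T₂.comp T₁ = ContinuousLinearMap.id ℂ H₂ := by
      rw [hT₁def, hT₂def, ← ContinuousLinearMap.adjoint_comp, hcomp,
        ContinuousLinearMap.adjoint_id]
    have := congrArg (fun (f : H₂ →L[ℂ] H₂) => f y) h
    simpa using this
  have hn1 : ‖T₁‖ = ‖Sc‖ := ContinuousLinearMap.adjoint.norm_map Sc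
  have hn2 : ‖T₂‖ = ‖Si‖ := ContinuousLinearMap.adjoint.norm_map Si
  have hP : ∀ i j, ⟪T₁ (k2 (x i)), T₁ (k2 (x j))⟫
      = φ (x i) * (starRingEnd ℂ) (φ (x j)) * ⟪k1 (x i), k1 (x j)⟫ := by
    intro i j
    rw [hT₁def, hScdef, hS, hS, inner_smul_left, inner_smul_right]
    simp [mul_comm, mul_left_comm, mul_assoc]
  have hM1 := sub_norm_gram_psd T₁ (fun i => k2 (x i))
  have hM2 := sub_norm_gram_psd T₂ (fun i => T₁ (k2 (x i)))
  have hV := gram_psd v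
  have hΦ := gram_psd (fun i => (starRingEnd ℂ) (φ (x i)))
  have hW := gram_psd (fun i => (starRingEnd ℂ) (w i))
  have h1 := psd_smul (schur_psd hV hM1)
    (r := α ^ 2 * ‖Si‖ ^ 2) (by positivity)
  have h2 := psd_smul (schur_psd hΦ hpos) (r := ‖Si‖ ^ 2) (by positivity)
  have h3 := schur_psd hW hM2
  have hsum := (h1.add h2).add h3
  have hEq : (Matrix.of fun i j : Fin n =>
      (((‖Sc‖ * ‖Si‖ : ℝ) : ℂ) ^ 2 * (α : ℂ) ^ 2
          * ⟪v i, v j⟫ - w i * (starRingEnd ℂ) (w j)) * ⟪k2 (x i), k2 (x j)⟫)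
      = ((α ^ 2 * ‖Si‖ ^ 2 : ℝ) : ℂ) • (Matrix.of fun i j : Fin n =>
            (Matrix.of fun i j : Fin n => ⟪v i, v j⟫) i j
            * (Matrix.of fun i j : Fin n =>
                ((‖T₁‖ : ℂ)) ^ 2 * ⟪k2 (x i), k2 (x j)⟫
                  - ⟪T₁ (k2 (x i)), T₁ (k2 (x j))⟫) i j)
        + ((‖Si‖ ^ 2 : ℝ) : ℂ) • (Matrix.of fun i j : Fin n =>
            (Matrix.of fun i j : Fin n =>
              ⟪(starRingEnd ℂ) (φ (x i)), (starRingEnd ℂ) (φ (x j))⟫) i j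
            * (Matrix.of fun i j : Fin n =>
                ((α : ℂ) ^ 2 * ⟪v i, v j⟫ - w i * (starRingEnd ℂ) (w j))
                  * ⟪k1 (x i), k1 (x j)⟫) i j)
        + (Matrix.of fun i j : Fin n =>
            (Matrix.of fun i j : Fin n =>
              ⟪(starRingEnd ℂ) (w i), (starRingEnd ℂ) (w j)⟫) i j
            * (Matrix.of fun i j : Fin n =>
                ((‖T₂‖ : ℂ)) ^ 2 * ⟪T₁ (k2 (x i)), T₁ (k2 (x j))⟫
                  - ⟪T₂ (T₁ (k2 (x i))), T₂ (T₁ (k2 (x j)))⟫) i j) := by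
    ext i j
    simp only [Matrix.add_apply, Matrix.smul_apply, Matrix.of_apply, smul_eq_mul,
      RCLike.inner_apply, hP i j, hT21, hn1, hn2, RingHom.id_apply,
      starRingEnd_self_apply, Complex.ofReal_mul, Complex.ofReal_pow]
    ring
  rw [hEq]
  exact (h1.add h2).add h3
end
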